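/- Let (F, E, L) be a σ-admissible triple and M, N L-trivial φ-modules over E. Then the natural map V(M) ⊗_F V(N) → V(M ⊗ N) induced by the multiplication (L ⊗_E M) ⊗_L (L ⊗_E N) ≅ L ⊗_E (M ⊗ N) is an isomorphism of F-vector spaces. -/

import Mathlib

open scoped TensorProduct


section Aux699

variable {F L V₁ V₂ : Type} [Field F] [CommRing L] [Algebra F L]
  [AddCommGroup V₁] [Module F V₁] [AddCommGroup V₂] [Module F V₂]

local notation "W" => V₁ ⊗[F] V₂

private lemma aux699_one_tmul_inj (hinj : Function.Injective (algebraMap F L))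
    {w : V₁ ⊗[F] V₂} (hw : (1 : L) ⊗ₜ[F] w = 0) : w = 0 := by
  classical
  let b := Module.Basis.ofVectorSpace F (V₁ ⊗[F] V₂)
  have h : ∀ i, algebraMap F L ((b.repr w) i) = 0 := by
    intro i
    have := (b.baseChange L).repr.map_zero
    have h2 : ((b.baseChange L).repr ((1 : L) ⊗ₜ[F] w)) i = 0 := by rw [hw]; simp
    rwa [Module.Basis.baseChange_repr_tmul, Algebra.smul_def, mul_one] at h2
  have : b.repr w = 0 := by ext i; exact hinj (by simpa using h i)
  simpa using b.repr.map_eq_zero_iff.mp this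

private lemma aux699_fixed (σ : L →ₗ[F] L)
    (hfix : ∀ x : L, σ x = x → ∃ f : F, algebraMap F L f = x)
    (t : L ⊗[F] (V₁ ⊗[F] V₂)) (ht : LinearMap.rTensor (V₁ ⊗[F] V₂) σ t = t) :
    ∃ w : V₁ ⊗[F] V₂, t = (1 : L) ⊗ₜ[F] w := by
  classical
  let b := Module.Basis.ofVectorSpace F (V₁ ⊗[F] V₂)
  let bc := b.baseChange L
  set s : _ →₀ L := bc.repr t with hs
  have hbc : ∀ (x : L) i, x • bc i = x ⊗ₜ[F] (b i : W) := by
    intro x i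
    rw [show bc i = (1 : L) ⊗ₜ[F] (b i : W) from Module.Basis.baseChange_apply L b i,
      TensorProduct.smul_tmul', smul_eq_mul, mul_one]
  have hts : t = s.sum fun i x => x ⊗ₜ[F] (b i : W) := by
    conv_lhs => rw [← bc.repr.symm_apply_apply t]
    rw [← hs, Module.Basis.repr_symm_apply, Finsupp.linearCombination_apply]
    exact Finsupp.sum_congr fun i _ => hbc _ i
  have hrt : LinearMap.rTensor W σ t = s.sum fun i x => σ x ⊗ₜ[F] (b i : W) := by
    rw [hts, map_finsuppSum]
    exact Finsupp.sum_congr fun i _ => by rw [LinearMap.rTensor_tmul]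
  have hsymm : bc.repr.symm (s.mapRange σ σ.map_zero) = LinearMap.rTensor W σ t := by
    rw [Module.Basis.repr_symm_apply, Finsupp.linearCombination_apply, hrt,
      Finsupp.sum_mapRange_index (by simp)]
    exact Finsupp.sum_congr fun i _ => hbc _ i
  have hfixcoord : ∀ i, σ (s i) = s i := by
    intro i
    have : s.mapRange σ σ.map_zero = s := by
      apply bc.repr.symm.injective
      rw [hsymm, ht, hs]
      exact (bc.repr.symm_apply_apply t).symm
    calc σ (s i) = (s.mapRange σ σ.map_zero) i := (Finsupp.mapRange_apply).symm
      _ = s i := by rw [this]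
  choose f hf using fun i => hfix (s i) (hfixcoord i)
  refine ⟨s.support.sum fun i => f i • (b i : W), ?_⟩
  rw [hts, TensorProduct.tmul_sum, Finsupp.sum]
  refine Finset.sum_congr rfl fun i _ => ?_
  rw [TensorProduct.tmul_smul, TensorProduct.smul_tmul', ← Algebra.algebraMap_eq_smul_one, hf i]

end Aux699

set_option maxHeartbeats 1000000 in
set_option synthInstance.maxHeartbeats 400000 in
theorem aux699_main {F E L : Type} [Field F] [Field E] [CommRing L] [Nontrivial L]
    [Algebra F E] [Algebra E L] [Algebra F L] [SMulCommClass E F L]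
    (σL : L →+* L)
    (hfix : ∀ x : L, σL x = x → ∃ f : F, algebraMap F L f = x)
    (hfixed : ∀ f : F, σL (algebraMap F L f) = algebraMap F L f)
    (M : Type) [AddCommGroup M] [Module E M]
    (N : Type) [AddCommGroup N] [Module E N]
    (fM : M → M) (fN : N → N)
    (VM : Submodule F (L ⊗[E] M)) (VN : Submodule F (L ⊗[E] N))
    (ιM : (L ⊗[F] VM) →ₗ[F] (L ⊗[E] M))
    (hιM : ∀ (x : L) (v : VM), ιM (x ⊗ₜ[F] v) = x • (v : L ⊗[E] M))
    (ιN : (L ⊗[F] VN) →ₗ[F] (L ⊗[E] N))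
    (hιN : ∀ (x : L) (v : VN), ιN (x ⊗ₜ[F] v) = x • (v : L ⊗[E] N))
    (hMtriv : Function.Bijective ιM) (hNtriv : Function.Bijective ιN)
    (φTMN : L ⊗[E] (M ⊗[E] N) →+ L ⊗[E] (M ⊗[E] N))
    (hφTMN : ∀ (x : L) (y : M) (z : N),
      φTMN (x ⊗ₜ[E] (y ⊗ₜ[E] z)) = σL x ⊗ₜ[E] (fM y ⊗ₜ[E] fN z))
    (VMN : Submodule F (L ⊗[E] (M ⊗[E] N)))
    (hVMN : ∀ v, v ∈ VMN → φTMN v = v)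
    (mul : (L ⊗[E] M) →ₗ[E] (L ⊗[E] N) →ₗ[E] (L ⊗[E] (M ⊗[E] N)))
    (hmul : ∀ (x : L) (y : M) (x' : L) (z : N),
      mul (x ⊗ₜ[E] y) (x' ⊗ₜ[E] z) = (x * x') ⊗ₜ[E] (y ⊗ₜ[E] z))
    (θ : VM ⊗[F] VN →ₗ[F] VMN)
    (hθ : ∀ (v : VM) (w : VN),
      (θ (v ⊗ₜ[F] w) : L ⊗[E] (M ⊗[E] N)) = mul v w) :
    Function.Bijective θ := by
  classical
  -- σL as an F-linear map
  let σ : L →ₗ[F] L :=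
    { toFun := σL, map_add' := map_add σL,
      map_smul' := by
        intro f x
        simp only [RingHom.id_apply]
        rw [Algebra.smul_def, map_mul, hfixed, ← Algebra.smul_def] }
  have hσcoe : ∀ x, σ x = σL x := fun _ => rfl
  clear_value σ
  -- mul is L-linear in the first variable
  have hmulsmul : ∀ (x : L) (u : L ⊗[E] M) (u' : L ⊗[E] N),
      mul (x • u) u' = x • mul u u' := by
    intro x u u'
    induction u using TensorProduct.induction_on with
    | zero => simp
    | tmul a y =>
      induction u' using TensorProduct.induction_on with
      | zero => simp
      | tmul a' z =>
        rw [TensorProduct.smul_tmul', smul_eq_mul, hmul, hmul, TensorProduct.smul_tmul',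
          smul_eq_mul, mul_assoc]
      | add p q hp hq => simp only [map_add, hp, hq, smul_add]
    | add p q hp hq =>
      rw [smul_add, map_add, map_add, LinearMap.add_apply, LinearMap.add_apply, hp, hq, smul_add]
  -- identification of the inverse base-change iso with mul
  have hdsymm : ∀ (u : L ⊗[E] M) (u' : L ⊗[E] N),
      (TensorProduct.AlgebraTensorModule.distribBaseChange E L M N).symm
        (u ⊗ₜ[L] u') = mul u u' := by
    intro u u'
    induction u using TensorProduct.induction_on with
    | zero => simp [TensorProduct.zero_tmul]
    | tmul a y =>
      induction u' using TensorProduct.induction_on with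
      | zero => simp [TensorProduct.tmul_zero]
      | tmul a' z =>
        rw [hmul]
        simp [TensorProduct.AlgebraTensorModule.distribBaseChange, TensorProduct.smul_tmul',
          smul_eq_mul, mul_comm]
      | add p q hp hq => simp only [TensorProduct.tmul_add, map_add, hp, hq]
    | add p q hp hq =>
      simp only [TensorProduct.add_tmul, map_add, hp, hq, LinearMap.add_apply]
  -- the base-change maps for VM and VN
  have hιM' : ∀ t, (VM.subtype.liftBaseChange L) t = ιM t := by
    intro t
    induction t using TensorProduct.induction_on with
    | zero => simp
    | tmul x v => rw [LinearMap.liftBaseChange_tmul, hιM]; rfl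
    | add p q hp hq => simp only [map_add, hp, hq]
  have hMbij : Function.Bijective (VM.subtype.liftBaseChange L) := by
    have h : ⇑(VM.subtype.liftBaseChange L) = ⇑ιM := funext hιM'
    rw [h]; exact hMtriv
  have hιN' : ∀ t, (VN.subtype.liftBaseChange L) t = ιN t := by
    intro t
    induction t using TensorProduct.induction_on with
    | zero => simp
    | tmul x v => rw [LinearMap.liftBaseChange_tmul, hιN]; rfl
    | add p q hp hq => simp only [map_add, hp, hq]
  have hNbij : Function.Bijective (VN.subtype.liftBaseChange L) := by
    have h : ⇑(VN.subtype.liftBaseChange L) = ⇑ιN := funext hιN'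
    rw [h]; exact hNtriv
  let eM := LinearEquiv.ofBijective _ hMbij
  let eN := LinearEquiv.ofBijective _ hNbij
  -- the big iso Φ : L ⊗[F] (VM ⊗[F] VN) ≃ₗ[L] L ⊗[E] (M ⊗[E] N)
  let Φ : (L ⊗[F] (VM ⊗[F] VN)) ≃ₗ[L] (L ⊗[E] (M ⊗[E] N)) :=
    (TensorProduct.AlgebraTensorModule.distribBaseChange F L VM VN) ≪≫ₗ
      (TensorProduct.congr eM eN) ≪≫ₗ
      (TensorProduct.AlgebraTensorModule.distribBaseChange E L M N).symm
  have hΦ : ∀ (x : L) (s : VM ⊗[F] VN),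
      Φ (x ⊗ₜ[F] s) = x • ((θ s : VMN) : L ⊗[E] (M ⊗[E] N)) := by
    intro x s
    induction s using TensorProduct.induction_on with
    | zero => simp [TensorProduct.tmul_zero]
    | tmul v w =>
      have h1 : (TensorProduct.AlgebraTensorModule.distribBaseChange F L VM VN)
          (x ⊗ₜ[F] (v ⊗ₜ[F] w)) =
          (x ⊗ₜ[F] v) ⊗ₜ[L] ((1 : L) ⊗ₜ[F] w) := by
        simp [TensorProduct.AlgebraTensorModule.distribBaseChange]
      have h2 : eM (x ⊗ₜ[F] v) = x • (v : L ⊗[E] M) := by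
        rw [LinearEquiv.ofBijective_apply, LinearMap.liftBaseChange_tmul]; rfl
      have h3 : eN ((1 : L) ⊗ₜ[F] w) = (w : L ⊗[E] N) := by
        rw [LinearEquiv.ofBijective_apply, LinearMap.liftBaseChange_tmul, one_smul]; rfl
      rw [LinearEquiv.trans_apply, LinearEquiv.trans_apply, h1, TensorProduct.congr_tmul,
        h2, h3, hdsymm, hmulsmul, hθ]
    | add p q hp hq =>
      simp only [TensorProduct.tmul_add, map_add, hp, hq, Submodule.coe_add, smul_add]
  clear_value eM eN Φ
  -- φTMN is σL-semilinear
  have hφsmul : ∀ (x : L) (u : L ⊗[E] (M ⊗[E] N)),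
      φTMN (x • u) = σL x • φTMN u := by
    intro x u
    induction u using TensorProduct.induction_on with
    | zero => simp
    | tmul a m =>
      rw [TensorProduct.smul_tmul', smul_eq_mul]
      induction m using TensorProduct.induction_on with
      | zero => simp [TensorProduct.tmul_zero]
      | tmul y z =>
        rw [hφTMN, hφTMN, TensorProduct.smul_tmul', smul_eq_mul, map_mul]
      | add p q hp hq =>
        rw [TensorProduct.tmul_add, TensorProduct.tmul_add, map_add, map_add, hp, hq, smul_add]
    | add p q hp hq => rw [smul_add, map_add, map_add, hp, hq, smul_add]
  -- intertwining relation
  have hint : ∀ t, Φ (LinearMap.rTensor (VM ⊗[F] VN) σ t) = φTMN (Φ t) := by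
    intro t
    induction t using TensorProduct.induction_on with
    | zero => simp
    | tmul x s =>
      rw [LinearMap.rTensor_tmul, hΦ, hΦ, hφsmul, hVMN _ (θ s).2, hσcoe]
    | add p q hp hq => simp only [map_add, hp, hq]
  have hinjalg : Function.Injective (algebraMap F L) := RingHom.injective _
  -- injectivity
  have hker : ∀ t, θ t = 0 → t = 0 := by
    intro t ht
    have h0 : Φ ((1 : L) ⊗ₜ[F] t) = 0 := by
      rw [hΦ, ht]; simp
    have h1 : (1 : L) ⊗ₜ[F] t = 0 := Φ.injective (by rw [h0, map_zero])
    exact @aux699_one_tmul_inj F L VM VN _ _ _ _ VM.module _ VN.module hinjalg t h1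
  letI : AddCommGroup (VM ⊗[F] VN) := @TensorProduct.addCommGroup F _ VM VN _ _ _ _
  have hinj : Function.Injective θ := fun a b hab => by
    have h := hker (a - b) (by rw [map_sub, hab, sub_self])
    exact sub_eq_zero.mp h
  -- surjectivity
  have hsurj : Function.Surjective θ := by
    intro u
    have hu : φTMN (u : L ⊗[E] (M ⊗[E] N)) = (u : _) := hVMN _ u.2
    obtain ⟨t₀, ht₀⟩ : ∃ t₀, Φ t₀ = (u : L ⊗[E] (M ⊗[E] N)) :=
      ⟨Φ.symm _, Φ.apply_symm_apply _⟩
    have hfixt : LinearMap.rTensor (VM ⊗[F] VN) σ t₀ = t₀ := by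
      apply Φ.injective
      rw [hint, ht₀, hu]
    obtain ⟨s, hsval⟩ := @aux699_fixed F L VM VN _ _ _ _ VM.module _ VN.module σ
      (fun x hx => hfix x (by rw [← hσcoe]; exact hx)) t₀ (by convert hfixt)
    refine ⟨s, ?_⟩
    rw [hsval, hΦ, one_smul] at ht₀
    exact Subtype.ext ht₀
  exact ⟨hinj, hsurj⟩




/-!
STATEMENT 8: Let (F, E, L) be a σ-admissible triple and M, N L-trivial φ-modules over E.
Then the natural map V(M) ⊗_F V(N) → V(M ⊗ N), induced by the multiplication
(L ⊗_E M) ⊗_L (L ⊗_E N) ≅ L ⊗_E (M ⊗ N), is an isomorphism of F-vector spaces.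
-/

set_option maxHeartbeats 2000000 in
set_option synthInstance.maxHeartbeats 400000 in
theorem stmt8
    -- the σ-admissible triple (F, E, L)
    (d : ℕ) [NeZero d] (Ll : ZMod d → Type) [∀ l, Field (Ll l)]
    (E : Type) [Field E] [∀ l, Algebra E (Ll l)]
    (σL : (∀ l, Ll l) →+* (∀ l, Ll l)) (hσLinj : Function.Injective σL)
    (σE : E →+* E)
    (hσcomp : ∀ e : E, σL (algebraMap E (∀ l, Ll l) e) = algebraMap E (∀ l, Ll l) (σE e))
    (hshift : ∀ (x : ∀ l, Ll l) (l : ZMod d), (∀ k, k ≠ l → x k = 0) →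
        ∀ m, m ≠ l + 1 → σL x m = 0)
    (F : Type) [Field F] [Algebra F E]
    [Algebra F (∀ l, Ll l)] [IsScalarTower F E (∀ l, Ll l)]
    [SMulCommClass E F (∀ l, Ll l)]
    (hEfix : ∀ e : E, σE e = e ↔ ∃ f : F, algebraMap F E f = e)
    (hLfix : ∀ x : ∀ l, Ll l, σL x = x ↔
        ∃ f : F, algebraMap E (∀ l, Ll l) (algebraMap F E f) = x)
    [∀ l, Algebra.IsSeparable E (Ll l)]
    -- two L-trivial φ-modules M and N over E
    (M : Type) [AddCommGroup M] [Module E M]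
    (φM : M →+ M) (hφM : ∀ (e : E) (x : M), φM (e • x) = σE e • φM x)
    (N : Type) [AddCommGroup N] [Module E N]
    (φN : N →+ N) (hφN : ∀ (e : E) (x : N), φN (e • x) = σE e • φN x)
    (φTM : (∀ l, Ll l) ⊗[E] M →+ (∀ l, Ll l) ⊗[E] M)
    (hφTM : ∀ (x : ∀ l, Ll l) (y : M), φTM (x ⊗ₜ[E] y) = σL x ⊗ₜ[E] φM y)
    (φTN : (∀ l, Ll l) ⊗[E] N →+ (∀ l, Ll l) ⊗[E] N)
    (hφTN : ∀ (x : ∀ l, Ll l) (y : N), φTN (x ⊗ₜ[E] y) = σL x ⊗ₜ[E] φN y)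
    (VM : Submodule F ((∀ l, Ll l) ⊗[E] M)) (hVM : ∀ v, v ∈ VM ↔ φTM v = v)
    (VN : Submodule F ((∀ l, Ll l) ⊗[E] N)) (hVN : ∀ v, v ∈ VN ↔ φTN v = v)
    (ιM : ((∀ l, Ll l) ⊗[F] VM) →ₗ[F] ((∀ l, Ll l) ⊗[E] M))
    (hιM : ∀ (x : ∀ l, Ll l) (v : VM), ιM (x ⊗ₜ[F] v) = x • (v : (∀ l, Ll l) ⊗[E] M))
    (ιN : ((∀ l, Ll l) ⊗[F] VN) →ₗ[F] ((∀ l, Ll l) ⊗[E] N))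
    (hιN : ∀ (x : ∀ l, Ll l) (v : VN), ιN (x ⊗ₜ[F] v) = x • (v : (∀ l, Ll l) ⊗[E] N))
    (hMtriv : Function.Bijective ιM) (hNtriv : Function.Bijective ιN)
    [FiniteDimensional E M] [FiniteDimensional E N]
    -- the tensor product M ⊗ N with its φ-action σ ⊗ (φ ⊗ φ)
    (φTMN : (∀ l, Ll l) ⊗[E] (M ⊗[E] N) →+ (∀ l, Ll l) ⊗[E] (M ⊗[E] N))
    (hφTMN : ∀ (x : ∀ l, Ll l) (y : M) (z : N),
      φTMN (x ⊗ₜ[E] (y ⊗ₜ[E] z)) = σL x ⊗ₜ[E] (φM y ⊗ₜ[E] φN z))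
    (VMN : Submodule F ((∀ l, Ll l) ⊗[E] (M ⊗[E] N)))
    (hVMN : ∀ v, v ∈ VMN ↔ φTMN v = v)
    -- the multiplication map (L ⊗_E M) ⊗_L (L ⊗_E N) → L ⊗_E (M ⊗ N)
    (mul : ((∀ l, Ll l) ⊗[E] M) →ₗ[E] ((∀ l, Ll l) ⊗[E] N) →ₗ[E]
      ((∀ l, Ll l) ⊗[E] (M ⊗[E] N)))
    (hmul : ∀ (x : ∀ l, Ll l) (y : M) (x' : ∀ l, Ll l) (z : N),
      mul (x ⊗ₜ[E] y) (x' ⊗ₜ[E] z) = (x * x') ⊗ₜ[E] (y ⊗ₜ[E] z))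
    -- the natural map V(M) ⊗_F V(N) → V(M ⊗ N)
    (θ : VM ⊗[F] VN →ₗ[F] VMN)
    (hθ : ∀ (v : VM) (w : VN),
      (θ (v ⊗ₜ[F] w) : (∀ l, Ll l) ⊗[E] (M ⊗[E] N)) = mul v w) :
    Function.Bijective θ := by
  haveI : Nontrivial (∀ l, Ll l) := ⟨0, 1, fun h => zero_ne_one (congrFun h 0)⟩
  refine aux699_main σL ?_ ?_ M N φM φN VM VN ιM hιM ιN hιN hMtriv hNtriv φTMN hφTMN
    VMN (fun v hv => (hVMN v).1 hv) mul hmul θ hθ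
  · intro x hx
    obtain ⟨f, hf⟩ := (hLfix x).1 hx
    exact ⟨f, by rw [IsScalarTower.algebraMap_apply F E (∀ l, Ll l)]; exact hf⟩
  · intro f
    have h : σL (algebraMap E (∀ l, Ll l) (algebraMap F E f)) =
        algebraMap E (∀ l, Ll l) (algebraMap F E f) := (hLfix _).2 ⟨f, rfl⟩
    rw [IsScalarTower.algebraMap_apply F E (∀ l, Ll l) f]
    exact h
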